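/- Let λ and μ be complementary partitions inside an a×b rectangle, i.e. λᵢ + μ_{b−i+1} = a for 1 ≤ i ≤ b (with parts padded by zeros). Define φ_b(λ,x) = Π_{(i,j)∈λ} ((j−1) + k(i−1−b) + x) / (λᵢ − j + k(i−1−λ'_j) + x) as a rational function in x and k. Then φ_b(λ,x) = φ_b(μ,x). -/

import Mathlib

/-- The conjugate partition: λ'_{j+1} = #{i < n : λᵢ > j} (0-based column index j). -/
def conjPart (lam : ℕ → ℕ) (n j : ℕ) : ℕ :=
  ((Finset.range n).filter fun i => j < lam i).card

/-- φ_p(λ,x) = Π_{(i,j)∈λ} ((j−1) + k(i−1−p) + x) / (λᵢ − j + k(i−1−λ'_j) + x),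
with 0-based box indices, `rows` rows and parameter p. -/
noncomputable def phiP (lam : ℕ → ℕ) (rows : ℕ) (p x k : ℝ) : ℝ :=
  ∏ i ∈ Finset.range rows, ∏ j ∈ Finset.range (lam i),
    ((j : ℝ) + k * ((i : ℝ) - p) + x) /
      ((lam i : ℝ) - ((j : ℝ) + 1) + k * ((i : ℝ) - (conjPart lam rows j : ℝ)) + x)

namespace Stmt7Aux

open Finset

lemma conj_le_len (lam : ℕ → ℕ) (b j : ℕ) : conjPart lam b j ≤ b := by
  have h := Finset.card_filter_le (range b) (fun i => j < lam i)
  simpa [conjPart] using h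

lemma lt_conj_iff {lam : ℕ → ℕ} (hA : Antitone lam) (b : ℕ) {i j : ℕ} :
    i < conjPart lam b j ↔ i < b ∧ j < lam i := by
  constructor
  · intro hi
    by_contra hcon
    have hsub : ((range b).filter fun m => j < lam m) ⊆ range i := by
      intro m hm
      rw [mem_filter, mem_range] at hm
      rw [mem_range]
      by_contra hmi
      push_neg at hmi
      exact hcon ⟨lt_of_le_of_lt hmi hm.1, lt_of_lt_of_le hm.2 (hA hmi)⟩
    have hle : conjPart lam b j ≤ i := by
      have := Finset.card_le_card hsub
      simpa [conjPart] using this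
    omega
  · rintro ⟨hib, hj⟩
    have hsub : range (i + 1) ⊆ (range b).filter fun m => j < lam m := by
      intro m hm
      rw [mem_range] at hm
      rw [mem_filter, mem_range]
      have hmi : m ≤ i := by omega
      exact ⟨lt_of_le_of_lt hmi hib, lt_of_lt_of_le hj (hA hmi)⟩
    have := Finset.card_le_card hsub
    simpa [conjPart] using this

lemma conj_le_iff {lam : ℕ → ℕ} {b : ℕ} (hA : Antitone lam)
    (h0 : ∀ i, b ≤ i → lam i = 0) {r j : ℕ} :
    conjPart lam b j ≤ r ↔ lam r ≤ j := by
  constructor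
  · intro h
    by_cases hrb : r < b
    · by_contra hc
      push_neg at hc
      have := (lt_conj_iff hA b).mpr ⟨hrb, hc⟩
      omega
    · push_neg at hrb
      rw [h0 r hrb]
      exact Nat.zero_le j
  · intro h
    by_contra hc
    push_neg at hc
    have := ((lt_conj_iff hA b).mp hc).2
    omega

lemma lam_conj_add_le {lam : ℕ → ℕ} {b : ℕ} (hA : Antitone lam)
    (h0 : ∀ i, b ≤ i → lam i = 0) (j t : ℕ) :
    lam (conjPart lam b j + t) ≤ j :=
  (conj_le_iff hA h0).mp (Nat.le_add_right _ _)

lemma conj_comp {a b : ℕ} {lam mu : ℕ → ℕ} (hlamle : ∀ i, lam i ≤ a)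
    (hcomp : ∀ i < b, lam i + mu (b - 1 - i) = a) {j : ℕ} (hj : j < a) :
    conjPart mu b j = b - conjPart lam b (a - 1 - j) := by
  have hmu : ∀ i < b, mu i = a - lam (b - 1 - i) := by
    intro i hi
    have h1 := hcomp (b - 1 - i) (by omega)
    have h2 : b - 1 - (b - 1 - i) = i := by omega
    rw [h2] at h1
    omega
  have hb : ((range b).filter fun i => j < mu i).card
      = ((range b).filter fun i => ¬ (a - 1 - j < lam i)).card := by
    apply Finset.card_nbij' (fun i => b - 1 - i) (fun i => b - 1 - i)
    · intro i hi
      simp only [mem_coe, mem_filter, mem_range] at hi ⊢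
      obtain ⟨hib, hji⟩ := hi
      refine ⟨by omega, ?_⟩
      rw [hmu i hib] at hji
      have := hlamle (b - 1 - i)
      omega
    · intro i hi
      simp only [mem_coe, mem_filter, mem_range] at hi ⊢
      obtain ⟨hib, hcond⟩ := hi
      refine ⟨by omega, ?_⟩
      rw [hmu (b - 1 - i) (by omega)]
      have h2 : b - 1 - (b - 1 - i) = i := by omega
      rw [h2]
      have := hlamle i
      omega
    · intro i hi
      simp only [mem_coe, mem_filter, mem_range] at hi ⊢
      omega
    · intro i hi
      simp only [mem_coe, mem_filter, mem_range] at hi ⊢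
      omega
  rw [conjPart, hb, Finset.filter_not, card_sdiff_of_subset (filter_subset _ _), card_range]
  rfl

lemma cast_pred_sub {k m n : ℕ} (h : k + m = n) : (k : ℝ) = (n : ℝ) - (m : ℝ) := by
  have h2 : (k : ℝ) + (m : ℝ) = (n : ℝ) := by exact_mod_cast congrArg (Nat.cast (R := ℝ)) h
  linarith

/-- KEY lemma: N(λ) · D(μ) equals the canonical symmetric product. -/
lemma key (a b : ℕ) (lam mu : ℕ → ℕ) (k x : ℝ)
    (hlamA : Antitone lam) (hlam0 : ∀ i, b ≤ i → lam i = 0) (hlamle : ∀ i, lam i ≤ a)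
    (hcomp : ∀ i < b, lam i + mu (b - 1 - i) = a) :
    (∏ i ∈ range b, ∏ j ∈ range (lam i), ((j : ℝ) + k * ((i : ℝ) - (b : ℝ)) + x)) *
    (∏ i ∈ range b, ∏ j ∈ range (mu i),
        ((mu i : ℝ) - ((j : ℝ) + 1) + k * ((i : ℝ) - (conjPart mu b j : ℝ)) + x)) =
    ∏ t ∈ range b, ∏ j ∈ range a,
        (x - k * ((t : ℝ) + 1) + ((j : ℝ) - (lam (conjPart lam b j + t) : ℝ))) := by
  -- Step 1: rotate the D(μ) product into λ-coordinates
  have hD : (∏ i ∈ range b, ∏ j ∈ range (mu i),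
        ((mu i : ℝ) - ((j : ℝ) + 1) + k * ((i : ℝ) - (conjPart mu b j : ℝ)) + x))
      = ∏ i ∈ range b, ∏ j ∈ Ico (lam i) a,
          (x + ((j : ℝ) - (lam i : ℝ)) + k * ((conjPart lam b j : ℝ) - 1 - (i : ℝ))) := by
    calc
      (∏ i ∈ range b, ∏ j ∈ range (mu i),
          ((mu i : ℝ) - ((j : ℝ) + 1) + k * ((i : ℝ) - (conjPart mu b j : ℝ)) + x))
        = ∏ i ∈ range b, ∏ j ∈ range (mu (b - 1 - i)),
            ((mu (b - 1 - i) : ℝ) - ((j : ℝ) + 1)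
              + k * (((b - 1 - i : ℕ) : ℝ) - (conjPart mu b j : ℝ)) + x) :=
          (Finset.prod_range_reflect
            (fun i => ∏ j ∈ range (mu i),
              ((mu i : ℝ) - ((j : ℝ) + 1) + k * ((i : ℝ) - (conjPart mu b j : ℝ)) + x)) b).symm
      _ = ∏ i ∈ range b, ∏ j ∈ Ico (lam i) a,
            (x + ((j : ℝ) - (lam i : ℝ)) + k * ((conjPart lam b j : ℝ) - 1 - (i : ℝ))) := by
          refine Finset.prod_congr rfl fun i hi => ?_
          rw [mem_range] at hi
          have hrow : mu (b - 1 - i) = a - lam i := by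
            have := hcomp i hi
            omega
          calc
            (∏ j ∈ range (mu (b - 1 - i)),
                ((mu (b - 1 - i) : ℝ) - ((j : ℝ) + 1)
                  + k * (((b - 1 - i : ℕ) : ℝ) - (conjPart mu b j : ℝ)) + x))
              = ∏ j ∈ range (mu (b - 1 - i)),
                  ((mu (b - 1 - i) : ℝ) - (((mu (b - 1 - i) - 1 - j : ℕ) : ℝ) + 1)
                    + k * (((b - 1 - i : ℕ) : ℝ)
                        - (conjPart mu b (mu (b - 1 - i) - 1 - j) : ℝ)) + x) :=
                (Finset.prod_range_reflect
                  (fun j => ((mu (b - 1 - i) : ℝ) - ((j : ℝ) + 1)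
                    + k * (((b - 1 - i : ℕ) : ℝ) - (conjPart mu b j : ℝ)) + x))
                  (mu (b - 1 - i))).symm
            _ = ∏ j ∈ Ico (lam i) a,
                  (x + ((j : ℝ) - (lam i : ℝ))
                    + k * ((conjPart lam b j : ℝ) - 1 - (i : ℝ))) := by
                rw [Finset.prod_Ico_eq_prod_range, hrow]
                refine Finset.prod_congr rfl fun j hj => ?_
                rw [mem_range] at hj
                have hla := hlamle i
                have h1 : conjPart mu b (a - lam i - 1 - j) = b - conjPart lam b (lam i + j) := by
                  rw [conj_comp hlamle hcomp (show a - lam i - 1 - j < a by omega)]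
                  rw [show a - 1 - (a - lam i - 1 - j) = lam i + j by omega]
                have r3 : ((b - conjPart lam b (lam i + j) : ℕ) : ℝ)
                    = (b : ℝ) - (conjPart lam b (lam i + j) : ℝ) :=
                  Nat.cast_sub (conj_le_len lam b (lam i + j))
                have r1 : ((a - lam i : ℕ) : ℝ) = (a : ℝ) - (lam i : ℝ) :=
                  Nat.cast_sub (hlamle i)
                have r2 : ((a - lam i - 1 - j : ℕ) : ℝ)
                    = (a : ℝ) - (lam i : ℝ) - 1 - (j : ℝ) := by
                  rw [cast_pred_sub (show (a - lam i - 1 - j) + (lam i + 1 + j) = a by omega)]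
                  push_cast
                  ring
                have r4 : ((b - 1 - i : ℕ) : ℝ) = (b : ℝ) - 1 - (i : ℝ) := by
                  rw [cast_pred_sub (show (b - 1 - i) + (1 + i) = b by omega)]
                  push_cast
                  ring
                rw [h1, r3, r1, r2, r4]
                push_cast
                ring
  rw [hD]
  -- Step 2: merge the two double products into one over the full rectangle
  have hmerge : (∏ i ∈ range b, ∏ j ∈ range (lam i),
        ((j : ℝ) + k * ((i : ℝ) - (b : ℝ)) + x)) *
      (∏ i ∈ range b, ∏ j ∈ Ico (lam i) a,
        (x + ((j : ℝ) - (lam i : ℝ)) + k * ((conjPart lam b j : ℝ) - 1 - (i : ℝ))))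
      = ∏ i ∈ range b, ∏ j ∈ range a,
          (if j < lam i then ((j : ℝ) + k * ((i : ℝ) - (b : ℝ)) + x)
           else (x + ((j : ℝ) - (lam i : ℝ)) + k * ((conjPart lam b j : ℝ) - 1 - (i : ℝ)))) := by
    rw [← Finset.prod_mul_distrib]
    refine Finset.prod_congr rfl fun i _ => ?_
    calc
      (∏ j ∈ range (lam i), ((j : ℝ) + k * ((i : ℝ) - (b : ℝ)) + x)) *
        (∏ j ∈ Ico (lam i) a,
          (x + ((j : ℝ) - (lam i : ℝ)) + k * ((conjPart lam b j : ℝ) - 1 - (i : ℝ))))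
        = (∏ j ∈ Ico 0 (lam i),
            (if j < lam i then ((j : ℝ) + k * ((i : ℝ) - (b : ℝ)) + x)
             else (x + ((j : ℝ) - (lam i : ℝ)) + k * ((conjPart lam b j : ℝ) - 1 - (i : ℝ))))) *
          (∏ j ∈ Ico (lam i) a,
            (if j < lam i then ((j : ℝ) + k * ((i : ℝ) - (b : ℝ)) + x)
             else (x + ((j : ℝ) - (lam i : ℝ)) + k * ((conjPart lam b j : ℝ) - 1 - (i : ℝ))))) := by
          congr 1
          · rw [← Finset.range_eq_Ico]
            refine Finset.prod_congr rfl fun j hj => ?_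
            rw [mem_range] at hj
            rw [if_pos hj]
          · refine Finset.prod_congr rfl fun j hj => ?_
            rw [mem_Ico] at hj
            rw [if_neg (by omega)]
      _ = ∏ j ∈ Ico 0 a,
            (if j < lam i then ((j : ℝ) + k * ((i : ℝ) - (b : ℝ)) + x)
             else (x + ((j : ℝ) - (lam i : ℝ)) + k * ((conjPart lam b j : ℝ) - 1 - (i : ℝ)))) :=
          Finset.prod_Ico_consecutive _ (Nat.zero_le _) (hlamle i)
      _ = _ := by rw [Finset.range_eq_Ico]
  rw [hmerge, Finset.prod_comm]
  -- Step 3: per-column reindexing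
  have hcol : ∀ j ∈ range a,
      (∏ i ∈ range b,
        (if j < lam i then ((j : ℝ) + k * ((i : ℝ) - (b : ℝ)) + x)
         else (x + ((j : ℝ) - (lam i : ℝ)) + k * ((conjPart lam b j : ℝ) - 1 - (i : ℝ)))))
      = ∏ t ∈ range b,
          (x - k * ((t : ℝ) + 1) + ((j : ℝ) - (lam (conjPart lam b j + t) : ℝ))) := by
    intro j hj
    rw [mem_range] at hj
    have hcb : conjPart lam b j ≤ b := conj_le_len lam b j
    have hN : (∏ t ∈ Ico (b - conjPart lam b j) b,
          (x - k * ((t : ℝ) + 1) + ((j : ℝ) - (lam (conjPart lam b j + t) : ℝ))))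
        = ∏ i ∈ range (conjPart lam b j), ((j : ℝ) + k * ((i : ℝ) - (b : ℝ)) + x) := by
      calc
        (∏ t ∈ Ico (b - conjPart lam b j) b,
            (x - k * ((t : ℝ) + 1) + ((j : ℝ) - (lam (conjPart lam b j + t) : ℝ))))
          = ∏ t ∈ range (b - (b - conjPart lam b j)),
              (x - k * (((b - conjPart lam b j + t : ℕ) : ℝ) + 1)
                + ((j : ℝ) - (lam (conjPart lam b j + (b - conjPart lam b j + t)) : ℝ))) :=
            Finset.prod_Ico_eq_prod_range _ _ _
        _ = ∏ t ∈ range (conjPart lam b j),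
              (x - k * (((b - conjPart lam b j + t : ℕ) : ℝ) + 1)
                + ((j : ℝ) - (lam (conjPart lam b j + (b - conjPart lam b j + t)) : ℝ))) := by
            rw [show b - (b - conjPart lam b j) = conjPart lam b j by omega]
        _ = ∏ i ∈ range (conjPart lam b j),
              (x - k * (((b - conjPart lam b j + (conjPart lam b j - 1 - i) : ℕ) : ℝ) + 1)
                + ((j : ℝ)
                  - (lam (conjPart lam b j
                      + (b - conjPart lam b j + (conjPart lam b j - 1 - i))) : ℝ))) :=
            (Finset.prod_range_reflect
              (fun t => (x - k * (((b - conjPart lam b j + t : ℕ) : ℝ) + 1)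
                + ((j : ℝ) - (lam (conjPart lam b j + (b - conjPart lam b j + t)) : ℝ))))
              (conjPart lam b j)).symm
        _ = ∏ i ∈ range (conjPart lam b j), ((j : ℝ) + k * ((i : ℝ) - (b : ℝ)) + x) := by
            refine Finset.prod_congr rfl fun i hi => ?_
            rw [mem_range] at hi
            rw [show b - conjPart lam b j + (conjPart lam b j - 1 - i) = b - 1 - i by omega]
            rw [hlam0 (conjPart lam b j + (b - 1 - i)) (by omega)]
            rw [show ((b - 1 - i : ℕ) : ℝ) = (b : ℝ) - 1 - (i : ℝ) by
              rw [cast_pred_sub (show (b - 1 - i) + (1 + i) = b by omega)]; push_cast; ring]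
            push_cast
            ring
    have hF : (∏ i ∈ Ico (conjPart lam b j) b,
          (x + ((j : ℝ) - (lam i : ℝ)) + k * ((conjPart lam b j : ℝ) - 1 - (i : ℝ))))
        = ∏ t ∈ Ico 0 (b - conjPart lam b j),
            (x - k * ((t : ℝ) + 1) + ((j : ℝ) - (lam (conjPart lam b j + t) : ℝ))) := by
      rw [← Finset.range_eq_Ico]
      calc
        (∏ i ∈ Ico (conjPart lam b j) b,
            (x + ((j : ℝ) - (lam i : ℝ)) + k * ((conjPart lam b j : ℝ) - 1 - (i : ℝ))))
          = ∏ t ∈ range (b - conjPart lam b j),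
              (x + ((j : ℝ) - (lam (conjPart lam b j + t) : ℝ))
                + k * ((conjPart lam b j : ℝ) - 1 - ((conjPart lam b j + t : ℕ) : ℝ))) :=
            Finset.prod_Ico_eq_prod_range _ _ _
        _ = ∏ t ∈ range (b - conjPart lam b j),
              (x - k * ((t : ℝ) + 1) + ((j : ℝ) - (lam (conjPart lam b j + t) : ℝ))) := by
            refine Finset.prod_congr rfl fun t _ => ?_
            push_cast
            ring
    calc
      (∏ i ∈ range b,
        (if j < lam i then ((j : ℝ) + k * ((i : ℝ) - (b : ℝ)) + x)
         else (x + ((j : ℝ) - (lam i : ℝ)) + k * ((conjPart lam b j : ℝ) - 1 - (i : ℝ)))))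
        = (∏ i ∈ Ico 0 (conjPart lam b j),
            (if j < lam i then ((j : ℝ) + k * ((i : ℝ) - (b : ℝ)) + x)
             else (x + ((j : ℝ) - (lam i : ℝ)) + k * ((conjPart lam b j : ℝ) - 1 - (i : ℝ))))) *
          (∏ i ∈ Ico (conjPart lam b j) b,
            (if j < lam i then ((j : ℝ) + k * ((i : ℝ) - (b : ℝ)) + x)
             else (x + ((j : ℝ) - (lam i : ℝ)) + k * ((conjPart lam b j : ℝ) - 1 - (i : ℝ))))) := by
          rw [Finset.prod_Ico_consecutive _ (Nat.zero_le _) hcb, Finset.range_eq_Ico]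
      _ = (∏ i ∈ range (conjPart lam b j), ((j : ℝ) + k * ((i : ℝ) - (b : ℝ)) + x)) *
          (∏ i ∈ Ico (conjPart lam b j) b,
            (x + ((j : ℝ) - (lam i : ℝ)) + k * ((conjPart lam b j : ℝ) - 1 - (i : ℝ)))) := by
          congr 1
          · rw [← Finset.range_eq_Ico]
            refine Finset.prod_congr rfl fun i hi => ?_
            rw [mem_range] at hi
            have := ((lt_conj_iff hlamA b).mp hi).2
            rw [if_pos this]
          · refine Finset.prod_congr rfl fun i hi => ?_
            rw [mem_Ico] at hi
            have hnlt : ¬ j < lam i := by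
              intro h
              have := (lt_conj_iff hlamA b).mpr ⟨hi.2, h⟩
              omega
            rw [if_neg hnlt]
      _ = (∏ t ∈ Ico (b - conjPart lam b j) b,
            (x - k * ((t : ℝ) + 1) + ((j : ℝ) - (lam (conjPart lam b j + t) : ℝ)))) *
          (∏ t ∈ Ico 0 (b - conjPart lam b j),
            (x - k * ((t : ℝ) + 1) + ((j : ℝ) - (lam (conjPart lam b j + t) : ℝ)))) := by
          rw [hN, hF]
      _ = ∏ t ∈ range b,
            (x - k * ((t : ℝ) + 1) + ((j : ℝ) - (lam (conjPart lam b j + t) : ℝ))) := by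
          rw [mul_comm, Finset.prod_Ico_consecutive _ (Nat.zero_le _) (Nat.sub_le b _),
            ← Finset.range_eq_Ico]
  rw [Finset.prod_congr rfl hcol, Finset.prod_comm]

/-- ≥-threshold count identity for one partition. -/
lemma count_ge {a b t v : ℕ} {lam : ℕ → ℕ} (hA : Antitone lam)
    (h0 : ∀ i, b ≤ i → lam i = 0) :
    ((range a).filter fun j => v ≤ j - lam (conjPart lam b j + t)).card
      = ((range (a - v)).filter fun j =>
          conjPart lam b j ≤ conjPart lam b (j + v) + t).card := by
  apply Finset.card_nbij' (fun j => j - v) (fun j => j + v)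
  · intro j hj
    simp only [mem_coe, mem_filter, mem_range] at hj ⊢
    obtain ⟨hja, hcond⟩ := hj
    have hX : lam (conjPart lam b j + t) ≤ j := lam_conj_add_le hA h0 j t
    have hvj : v ≤ j := le_trans hcond (Nat.sub_le _ _)
    refine ⟨by omega, ?_⟩
    have h1 : lam (conjPart lam b j + t) ≤ j - v := by omega
    have h2 : conjPart lam b (j - v) ≤ conjPart lam b j + t := (conj_le_iff hA h0).mpr h1
    rw [show j - v + v = j by omega]
    exact h2
  · intro j hj
    simp only [mem_coe, mem_filter, mem_range] at hj ⊢
    obtain ⟨hjav, hcond⟩ := hj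
    refine ⟨by omega, ?_⟩
    have h1 : lam (conjPart lam b (j + v) + t) ≤ j := (conj_le_iff hA h0).mp hcond
    omega
  · intro j hj
    simp only [mem_coe, mem_filter, mem_range] at hj ⊢
    have hvj : v ≤ j := le_trans hj.2 (Nat.sub_le _ _)
    omega
  · intro j hj
    beta_reduce
    omega

/-- flip the threshold count to the complementary partition. -/
lemma count_flip {a b t v : ℕ} {lam mu : ℕ → ℕ} (hlamle : ∀ i, lam i ≤ a)
    (hcomp : ∀ i < b, lam i + mu (b - 1 - i) = a) :
    ((range (a - v)).filter fun j => conjPart mu b j ≤ conjPart mu b (j + v) + t).card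
      = ((range (a - v)).filter fun j =>
          conjPart lam b j ≤ conjPart lam b (j + v) + t).card := by
  apply Finset.card_nbij' (fun j => a - v - 1 - j) (fun j => a - v - 1 - j)
  · intro j hj
    simp only [mem_coe, mem_filter, mem_range] at hj ⊢
    obtain ⟨hj1, hj2⟩ := hj
    refine ⟨by omega, ?_⟩
    have e1 : conjPart mu b j = b - conjPart lam b (a - 1 - j) :=
      conj_comp hlamle hcomp (by omega)
    have e2 : conjPart mu b (j + v) = b - conjPart lam b (a - v - 1 - j) := by
      rw [conj_comp hlamle hcomp (by omega)]
      rw [show a - 1 - (j + v) = a - v - 1 - j by omega]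
    have c1 := conj_le_len lam b (a - 1 - j)
    have c2 := conj_le_len lam b (a - v - 1 - j)
    rw [e1, e2] at hj2
    rw [show a - v - 1 - j + v = a - 1 - j by omega]
    omega
  · intro j hj
    simp only [mem_coe, mem_filter, mem_range] at hj ⊢
    obtain ⟨hj1, hj2⟩ := hj
    refine ⟨by omega, ?_⟩
    have e1 : conjPart mu b (a - v - 1 - j) = b - conjPart lam b (j + v) := by
      rw [conj_comp hlamle hcomp (by omega)]
      rw [show a - 1 - (a - v - 1 - j) = j + v by omega]
    have e2 : conjPart mu b (a - v - 1 - j + v) = b - conjPart lam b j := by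
      rw [conj_comp hlamle hcomp (by omega)]
      rw [show a - 1 - (a - v - 1 - j + v) = j by omega]
    have c1 := conj_le_len lam b (j + v)
    have c2 := conj_le_len lam b j
    rw [e1, e2]
    omega
  · intro j hj
    simp only [mem_coe, mem_filter, mem_range] at hj ⊢
    omega
  · intro j hj
    simp only [mem_coe, mem_filter, mem_range] at hj ⊢
    omega

/-- fiber-count equality from ≥-count equality. -/
lemma card_fiber_eq {a : ℕ} (f g : ℕ → ℕ)
    (hge : ∀ v, ((range a).filter fun j => v ≤ f j).card
      = ((range a).filter fun j => v ≤ g j).card) (v : ℕ) :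
    ((range a).filter fun j => f j = v).card = ((range a).filter fun j => g j = v).card := by
  have hsplit : ∀ h : ℕ → ℕ,
      ((range a).filter fun j => v ≤ h j).card
        = ((range a).filter fun j => h j = v).card
          + ((range a).filter fun j => v + 1 ≤ h j).card := by
    intro h
    rw [← Finset.card_union_of_disjoint]
    · congr 1
      ext j
      simp only [mem_union, mem_filter, mem_range]
      omega
    · rw [Finset.disjoint_left]
      intro j hj1 hj2
      rw [mem_filter] at hj1 hj2
      omega
  have h1 := hsplit f
  have h2 := hsplit g
  have h3 := hge v
  have h4 := hge (v + 1)
  omega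

/-- products determined by fiber counts. -/
lemma prod_comp_eq {a : ℕ} (G : ℕ → ℝ) (f g : ℕ → ℕ)
    (hf : ∀ j ∈ range a, f j ∈ range a) (hg : ∀ j ∈ range a, g j ∈ range a)
    (hcard : ∀ v, ((range a).filter fun j => f j = v).card
      = ((range a).filter fun j => g j = v).card) :
    ∏ j ∈ range a, G (f j) = ∏ j ∈ range a, G (g j) := by
  rw [← Finset.prod_fiberwise_of_maps_to hf (fun j => G (f j)),
      ← Finset.prod_fiberwise_of_maps_to hg (fun j => G (g j))]
  refine Finset.prod_congr rfl fun v _ => ?_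
  have h1 : (∏ j ∈ (range a).filter fun j => f j = v, G (f j))
      = G v ^ ((range a).filter fun j => f j = v).card := by
    rw [Finset.prod_congr rfl (fun j hj => by rw [(Finset.mem_filter.mp hj).2]),
      Finset.prod_const]
  have h2 : (∏ j ∈ (range a).filter fun j => g j = v, G (g j))
      = G v ^ ((range a).filter fun j => g j = v).card := by
    rw [Finset.prod_congr rfl (fun j hj => by rw [(Finset.mem_filter.mp hj).2]),
      Finset.prod_const]
  rw [h1, h2, hcard v]

/-- the canonical product is complement-symmetric. -/
lemma P_symm (a b : ℕ) (lam mu : ℕ → ℕ) (k x : ℝ)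
    (hlamA : Antitone lam) (hlam0 : ∀ i, b ≤ i → lam i = 0) (hlamle : ∀ i, lam i ≤ a)
    (hmuA : Antitone mu) (hmu0 : ∀ i, b ≤ i → mu i = 0)
    (hcomp : ∀ i < b, lam i + mu (b - 1 - i) = a) :
    (∏ t ∈ range b, ∏ j ∈ range a,
        (x - k * ((t : ℝ) + 1) + ((j : ℝ) - (lam (conjPart lam b j + t) : ℝ))))
    = ∏ t ∈ range b, ∏ j ∈ range a,
        (x - k * ((t : ℝ) + 1) + ((j : ℝ) - (mu (conjPart mu b j + t) : ℝ))) := by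
  refine Finset.prod_congr rfl fun t _ => ?_
  have hl : ∀ j ∈ range a,
      (x - k * ((t : ℝ) + 1) + ((j : ℝ) - (lam (conjPart lam b j + t) : ℝ)))
        = x - k * ((t : ℝ) + 1) + ((j - lam (conjPart lam b j + t) : ℕ) : ℝ) := by
    intro j _
    rw [Nat.cast_sub (lam_conj_add_le hlamA hlam0 j t)]
  have hm : ∀ j ∈ range a,
      (x - k * ((t : ℝ) + 1) + ((j : ℝ) - (mu (conjPart mu b j + t) : ℝ)))
        = x - k * ((t : ℝ) + 1) + ((j - mu (conjPart mu b j + t) : ℕ) : ℝ) := by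
    intro j _
    rw [Nat.cast_sub (lam_conj_add_le hmuA hmu0 j t)]
  rw [Finset.prod_congr rfl hl, Finset.prod_congr rfl hm]
  exact prod_comp_eq (fun v => x - k * ((t : ℝ) + 1) + (v : ℝ))
    (fun j => j - lam (conjPart lam b j + t))
    (fun j => j - mu (conjPart mu b j + t))
    (fun j hj => by
      rw [mem_range] at hj ⊢
      show j - lam (conjPart lam b j + t) < a
      have := Nat.sub_le j (lam (conjPart lam b j + t))
      omega)
    (fun j hj => by
      rw [mem_range] at hj ⊢
      show j - mu (conjPart mu b j + t) < a
      have := Nat.sub_le j (mu (conjPart mu b j + t))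
      omega)
    (card_fiber_eq _ _ (fun w => by
      rw [count_ge hlamA hlam0, count_ge hmuA hmu0, count_flip hlamle hcomp]))

end Stmt7Aux

/-- If λ and μ are complementary partitions in an a×b rectangle
(λᵢ + μ_{b−i+1} = a), then φ_b(λ,x) = φ_b(μ,x) as rational functions of x and k,
i.e. for all x, k for which the denominators do not vanish. -/
theorem stmt_7 (a b : ℕ) (lam mu : ℕ → ℕ) (k x : ℝ)
    (hlamA : Antitone lam) (hmuA : Antitone mu)
    (hlam0 : ∀ i, b ≤ i → lam i = 0) (hmu0 : ∀ i, b ≤ i → mu i = 0)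
    (hlamle : ∀ i, lam i ≤ a) (hmule : ∀ i, mu i ≤ a)
    (hcomp : ∀ i < b, lam i + mu (b - 1 - i) = a)
    (hd1 : ∀ i < b, ∀ j < lam i,
      (lam i : ℝ) - ((j : ℝ) + 1) + k * ((i : ℝ) - (conjPart lam b j : ℝ)) + x ≠ 0)
    (hd2 : ∀ i < b, ∀ j < mu i,
      (mu i : ℝ) - ((j : ℝ) + 1) + k * ((i : ℝ) - (conjPart mu b j : ℝ)) + x ≠ 0) :
    phiP lam b b x k = phiP mu b b x k := by
  have hcomp' : ∀ i < b, mu i + lam (b - 1 - i) = a := by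
    intro i hi
    have h := hcomp (b - 1 - i) (by omega)
    rw [show b - 1 - (b - 1 - i) = i by omega] at h
    omega
  have expand : ∀ nu : ℕ → ℕ,
      phiP nu b b x k
        = (∏ i ∈ Finset.range b, ∏ j ∈ Finset.range (nu i),
            ((j : ℝ) + k * ((i : ℝ) - (b : ℝ)) + x))
          / (∏ i ∈ Finset.range b, ∏ j ∈ Finset.range (nu i),
            ((nu i : ℝ) - ((j : ℝ) + 1) + k * ((i : ℝ) - (conjPart nu b j : ℝ)) + x)) := by
    intro nu
    unfold phiP
    calc
      (∏ i ∈ Finset.range b, ∏ j ∈ Finset.range (nu i),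
          (((j : ℝ) + k * ((i : ℝ) - (b : ℝ)) + x) /
            ((nu i : ℝ) - ((j : ℝ) + 1) + k * ((i : ℝ) - (conjPart nu b j : ℝ)) + x)))
        = ∏ i ∈ Finset.range b,
            ((∏ j ∈ Finset.range (nu i), ((j : ℝ) + k * ((i : ℝ) - (b : ℝ)) + x)) /
              (∏ j ∈ Finset.range (nu i),
                ((nu i : ℝ) - ((j : ℝ) + 1) + k * ((i : ℝ) - (conjPart nu b j : ℝ)) + x))) :=
          Finset.prod_congr rfl fun i _ => Finset.prod_div_distrib _ _
      _ = _ := Finset.prod_div_distrib _ _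
  have hDl : (∏ i ∈ Finset.range b, ∏ j ∈ Finset.range (lam i),
      ((lam i : ℝ) - ((j : ℝ) + 1) + k * ((i : ℝ) - (conjPart lam b j : ℝ)) + x)) ≠ 0 := by
    rw [Finset.prod_ne_zero_iff]
    intro i hi
    rw [Finset.prod_ne_zero_iff]
    intro j hj
    exact hd1 i (Finset.mem_range.mp hi) j (Finset.mem_range.mp hj)
  have hDm : (∏ i ∈ Finset.range b, ∏ j ∈ Finset.range (mu i),
      ((mu i : ℝ) - ((j : ℝ) + 1) + k * ((i : ℝ) - (conjPart mu b j : ℝ)) + x)) ≠ 0 := by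
    rw [Finset.prod_ne_zero_iff]
    intro i hi
    rw [Finset.prod_ne_zero_iff]
    intro j hj
    exact hd2 i (Finset.mem_range.mp hi) j (Finset.mem_range.mp hj)
  rw [expand lam, expand mu, div_eq_div_iff hDl hDm]
  calc
    (∏ i ∈ Finset.range b, ∏ j ∈ Finset.range (lam i),
        ((j : ℝ) + k * ((i : ℝ) - (b : ℝ)) + x)) *
      (∏ i ∈ Finset.range b, ∏ j ∈ Finset.range (mu i),
        ((mu i : ℝ) - ((j : ℝ) + 1) + k * ((i : ℝ) - (conjPart mu b j : ℝ)) + x))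
      = ∏ t ∈ Finset.range b, ∏ j ∈ Finset.range a,
          (x - k * ((t : ℝ) + 1) + ((j : ℝ) - (lam (conjPart lam b j + t) : ℝ))) :=
        Stmt7Aux.key a b lam mu k x hlamA hlam0 hlamle hcomp
    _ = ∏ t ∈ Finset.range b, ∏ j ∈ Finset.range a,
          (x - k * ((t : ℝ) + 1) + ((j : ℝ) - (mu (conjPart mu b j + t) : ℝ))) :=
        Stmt7Aux.P_symm a b lam mu k x hlamA hlam0 hlamle hmuA hmu0 hcomp
    _ = (∏ i ∈ Finset.range b, ∏ j ∈ Finset.range (mu i),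
        ((j : ℝ) + k * ((i : ℝ) - (b : ℝ)) + x)) *
      (∏ i ∈ Finset.range b, ∏ j ∈ Finset.range (lam i),
        ((lam i : ℝ) - ((j : ℝ) + 1) + k * ((i : ℝ) - (conjPart lam b j : ℝ)) + x)) :=
        (Stmt7Aux.key a b mu lam k x hmuA hmu0 hmule hcomp').symm
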